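/- If F : ℝ^m × ℝ^n → [0,∞] and G : ℝ^n × ℝ^p → [0,∞] are nonnegative partial quadratic functions (on ℝ^{m+n} and ℝ^{n+p} respectively), then their relational composite (F;G)(x,z) = inf { F(x,y) + G(y,z) : y ∈ ℝ^n } (infimum in [0,∞]) is a nonnegative partial quadratic function on ℝ^{m+p}. -/

import Mathlib

open Matrix
open scoped ENNReal
open scoped RealInnerProductSpace

/-- A nonnegative partial quadratic function on `ℝ^ι`. -/
def IsNPQF {ι : Type} [Fintype ι] (f : (ι → ℝ) → ℝ≥0∞) : Prop :=
  ∃ (M : AffineSubspace ℝ (ι → ℝ)) (Q : Matrix ι ι ℝ) (b : ι → ℝ) (c : ℝ),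
    Q.IsSymm ∧
    (∀ x ∈ M, 0 ≤ x ⬝ᵥ Q.mulVec x + b ⬝ᵥ x + c) ∧
    (∀ x ∈ M, f x = ENNReal.ofReal (x ⬝ᵥ Q.mulVec x + b ⬝ᵥ x + c)) ∧
    (∀ x, x ∉ M → f x = ⊤)

lemma quad_nonneg_coeffs {a b c : ℝ} (h : ∀ t : ℝ, 0 ≤ a * (t * t) + b * t + c) :
    0 ≤ a ∧ (a = 0 → b = 0) := by
  constructor
  · by_contra ha
    push_neg at ha
    set t := max 1 ((1 + |b| + |c|) / (-a)) with ht
    have ht1 : (1:ℝ) ≤ t := le_max_left _ _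
    have ht2 : (1 + |b| + |c|) / (-a) ≤ t := le_max_right _ _
    have hna : 0 < -a := by linarith
    have h3 : 1 + |b| + |c| ≤ (-a) * t := by
      rw [div_le_iff₀ hna] at ht2; linarith [ht2]
    have hb : b * t ≤ |b| * t := mul_le_mul_of_nonneg_right (le_abs_self b) (by linarith)
    have hc : c ≤ |c| * t := le_trans (le_abs_self c) (le_mul_of_one_le_right (abs_nonneg c) ht1)
    have := h t
    nlinarith [mul_le_mul_of_nonneg_right h3 (le_trans zero_le_one ht1)]
  · intro ha
    subst ha
    have hd := discrim_le_zero (a := 0) (b := b) (c := c) (by intro x; have := h x; linarith)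
    rw [discrim] at hd
    nlinarith [hd]

lemma dp_mulVec_left {ι κ : Type} [Fintype ι] [Fintype κ] (A : Matrix κ ι ℝ)
    (x : ι → ℝ) (w : κ → ℝ) : (A *ᵥ x) ⬝ᵥ w = x ⬝ᵥ (Aᵀ *ᵥ w) := by
  simp only [dotProduct, Matrix.mulVec, Matrix.transpose_apply, dotProduct,
    Finset.sum_mul, Finset.mul_sum]
  rw [Finset.sum_comm]
  exact Finset.sum_congr rfl fun i _ => Finset.sum_congr rfl fun j _ => by ring

lemma quad_comp_affine {ι κ : Type} [Fintype ι] [Fintype κ] [DecidableEq ι]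
    (Q : Matrix κ κ ℝ) (hQ : Q.IsSymm) (b : κ → ℝ) (c : ℝ)
    (T : (ι → ℝ) →ₗ[ℝ] (κ → ℝ)) (v₀ : κ → ℝ) :
    ∃ (Q' : Matrix ι ι ℝ) (b' : ι → ℝ) (c' : ℝ), Q'.IsSymm ∧
      ∀ x : ι → ℝ, (T x + v₀) ⬝ᵥ Q.mulVec (T x + v₀) + b ⬝ᵥ (T x + v₀) + c
        = x ⬝ᵥ Q'.mulVec x + b' ⬝ᵥ x + c' := by
  set A := LinearMap.toMatrix' T with hA
  refine ⟨Aᵀ * Q * A, Aᵀ *ᵥ (Q *ᵥ v₀ + Qᵀ *ᵥ v₀ + b),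
    v₀ ⬝ᵥ Q *ᵥ v₀ + b ⬝ᵥ v₀ + c, ?_, ?_⟩
  · simp [Matrix.IsSymm, Matrix.transpose_mul, hQ.eq, Matrix.mul_assoc]
  · intro x
    have hT : T x = A *ᵥ x := by rw [hA, ← Matrix.toLin'_apply, Matrix.toLin'_toMatrix']
    have e1 : (A *ᵥ x) ⬝ᵥ Q *ᵥ (A *ᵥ x) = x ⬝ᵥ (Aᵀ * Q * A) *ᵥ x := by
      rw [Matrix.mulVec_mulVec, dp_mulVec_left, Matrix.mulVec_mulVec, ← Matrix.mul_assoc]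
    have e2 : (A *ᵥ x) ⬝ᵥ (Q *ᵥ v₀) = x ⬝ᵥ (Aᵀ *ᵥ (Q *ᵥ v₀)) := dp_mulVec_left A x _
    have e3 : v₀ ⬝ᵥ Q *ᵥ (A *ᵥ x) = x ⬝ᵥ (Aᵀ *ᵥ (Qᵀ *ᵥ v₀)) := by
      have : v₀ ⬝ᵥ Q *ᵥ (A *ᵥ x) = (Qᵀ *ᵥ v₀) ⬝ᵥ (A *ᵥ x) := by
        rw [Matrix.mulVec_transpose, dotProduct_mulVec]
      rw [this, dotProduct_comm, dp_mulVec_left]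
    have e4 : b ⬝ᵥ (A *ᵥ x) = x ⬝ᵥ (Aᵀ *ᵥ b) := by
      rw [dotProduct_comm, dp_mulVec_left]
    have e5 : (Aᵀ *ᵥ (Q *ᵥ v₀)) ⬝ᵥ x = x ⬝ᵥ (Aᵀ *ᵥ (Q *ᵥ v₀)) := dotProduct_comm _ _
    have e6 : (Aᵀ *ᵥ (Qᵀ *ᵥ v₀)) ⬝ᵥ x = x ⬝ᵥ (Aᵀ *ᵥ (Qᵀ *ᵥ v₀)) := dotProduct_comm _ _
    have e7 : (Aᵀ *ᵥ b) ⬝ᵥ x = x ⬝ᵥ (Aᵀ *ᵥ b) := dotProduct_comm _ _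
    rw [hT]
    simp only [Matrix.mulVec_add, dotProduct_add, add_dotProduct]
    linear_combination e1 + e2 + e3 + e4 - e5 - e6 - e7

lemma quadMin {E : Type} [NormedAddCommGroup E] [InnerProductSpace ℝ E]
    [FiniteDimensional ℝ E] (L : Submodule ℝ E) (T : E →ₗ[ℝ] E)
    (hT : ∀ u v : E, ⟪T u, v⟫ = ⟪u, T v⟫)
    (hpsd : ∀ l ∈ L, 0 ≤ ⟪l, T l⟫) :
    ∃ S : E →ₗ[ℝ] E, ∀ w : E,
      (∀ l ∈ L, ⟪l, T l⟫ = 0 → ⟪l, w⟫ = 0) →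
      (S w ∈ L ∧ ∀ l ∈ L, ⟪S w, w⟫ + ⟪S w, T (S w)⟫ ≤ ⟪l, w⟫ + ⟪l, T l⟫) := by
  classical
  set P : E →ₗ[ℝ] E := L.subtype.comp L.orthogonalProjectionOnto.toLinearMap with hP
  have hPmem : ∀ v : E, P v ∈ L := fun v => (L.orthogonalProjectionOnto v).2
  have hPid : ∀ l ∈ L, P l = l := fun l hl => Submodule.starProjection_eq_self_iff.mpr hl
  have hPsymm : ∀ u v : E, ⟪P u, v⟫ = ⟪u, P v⟫ := fun u v =>
    Submodule.inner_starProjection_left_eq_right L u v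
  set B : E →ₗ[ℝ] E := P.comp (T.comp P) with hB
  have hBapp : ∀ v, B v = P (T (P v)) := fun _ => rfl
  have hkerorth : (LinearMap.range B)ᗮ = LinearMap.ker B := by
    ext u
    rw [Submodule.mem_orthogonal, LinearMap.mem_ker]
    constructor
    · intro h
      have h2 : ⟪B u, B u⟫ = 0 := by
        have := h (B u) (LinearMap.mem_range_self B u)
        -- ⟪B u, u⟫ = 0; need ⟪B u, B u⟫... use symmetry of B
        have hBsymm : ∀ x y : E, ⟪B x, y⟫ = ⟪x, B y⟫ := by
          intro x y
          simp only [hBapp]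
          rw [hPsymm, hT, hPsymm]
        have h3 := h (B (B u)) (LinearMap.mem_range_self B _)
        rw [hBsymm] at h3
        exact h3
      exact inner_self_eq_zero.mp h2
    · intro h v hv
      obtain ⟨x, rfl⟩ := hv
      have hBsymm : ∀ x y : E, ⟪B x, y⟫ = ⟪x, B y⟫ := by
        intro x y
        simp only [hBapp]
        rw [hPsymm, hT, hPsymm]
      rw [hBsymm, h, inner_zero_right]
  have hrange : LinearMap.range B = (LinearMap.ker B)ᗮ := by
    rw [← hkerorth, Submodule.orthogonal_orthogonal]
  obtain ⟨g, hg⟩ := LinearMap.exists_rightInverse_of_surjective B.rangeRestrict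
    (LinearMap.range_rangeRestrict B)
  have hgapp : ∀ v : LinearMap.range B, B (g v) = (v : E) := by
    intro v
    have := congrArg (fun φ => φ v) hg
    simpa using congrArg Subtype.val this
  set ρ : E →ₗ[ℝ] E := g.comp ((LinearMap.range B).orthogonalProjectionOnto).toLinearMap with hρ
  have hρapp : ∀ v ∈ LinearMap.range B, B (ρ v) = v := by
    intro v hv
    have : (LinearMap.range B).orthogonalProjectionOnto v = ⟨v, hv⟩ :=
      Submodule.orthogonalProjectionOnto_mem_subspace_eq_self (⟨v, hv⟩ : LinearMap.range B)
    have h2 : B (g ((LinearMap.range B).orthogonalProjectionOnto v)) = v := by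
      rw [this, hgapp]
    exact h2
  refine ⟨(-(1/2 : ℝ)) • (P.comp (ρ.comp P)), ?_⟩
  intro w hw
  have hw' : P w ∈ LinearMap.range B := by
    rw [hrange, Submodule.mem_orthogonal]
    intro u hu
    have hu0 : B u = 0 := hu
    have h1 : ⟪P u, T (P u)⟫ = 0 := by
      have : ⟪u, B u⟫ = 0 := by rw [hu0, inner_zero_right]
      rwa [hBapp, ← hPsymm] at this
    have h2 : ⟪P u, w⟫ = 0 := hw (P u) (hPmem u) h1
    rw [hPsymm] at h2
    exact h2
  set Sw : E := (-(1/2 : ℝ)) • P (ρ (P w)) with hSw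
  have hSwshow : ((-(1/2 : ℝ)) • (P.comp (ρ.comp P))) w = Sw := by
    simp [hSw]
  rw [hSwshow]
  have hSwL : Sw ∈ L := Submodule.smul_mem L _ (hPmem _)
  refine ⟨hSwL, ?_⟩
  intro l hl
  set d : E := l - Sw with hd
  have hdL : d ∈ L := Submodule.sub_mem L hl hSwL
  have hdw : ∀ e ∈ L, ⟪e, T Sw⟫ = -(1/2) * ⟪e, w⟫ := by
    intro e he
    have h1 : T Sw = (-(1/2 : ℝ)) • T (P (ρ (P w))) := by rw [hSw, LinearMap.map_smul]
    rw [h1, inner_smul_right]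
    congr 1
    have h2 : ⟪e, T (P (ρ (P w)))⟫ = ⟪P e, T (P (ρ (P w)))⟫ := by rw [hPid e he]
    rw [h2, hPsymm, ← hBapp, hρapp _ hw', ← hPsymm, hPid e he]
  have hld : l = Sw + d := by rw [hd]; abel
  have hTd : ⟪Sw, T d⟫ = ⟪d, T Sw⟫ := by rw [← hT, real_inner_comm]
  have hexp : ⟪l, w⟫ + ⟪l, T l⟫
      = (⟪Sw, w⟫ + ⟪Sw, T Sw⟫) + ⟪d, T d⟫ + (⟪d, w⟫ + ⟪d, T Sw⟫ + ⟪Sw, T d⟫) := by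
    rw [hld]
    simp only [inner_add_left, inner_add_right, map_add]
    ring
  have hd2 := hdw d hdL
  have hpd := hpsd d hdL
  rw [hexp, hTd]
  linarith [hd2, hpd]

lemma quadMin' {κ : Type} [Fintype κ] [DecidableEq κ] (L : Submodule ℝ (κ → ℝ))
    (A : Matrix κ κ ℝ) (hA : A.IsSymm)
    (hpsd : ∀ l ∈ L, 0 ≤ l ⬝ᵥ A *ᵥ l) :
    ∃ S : (κ → ℝ) →ₗ[ℝ] (κ → ℝ), ∀ w : κ → ℝ,
      (∀ l ∈ L, l ⬝ᵥ A *ᵥ l = 0 → l ⬝ᵥ w = 0) →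
      (S w ∈ L ∧ ∀ l ∈ L, S w ⬝ᵥ w + S w ⬝ᵥ A *ᵥ (S w) ≤ l ⬝ᵥ w + l ⬝ᵥ A *ᵥ l) := by
  classical
  set E := EuclideanSpace ℝ κ with hE
  set e : E ≃ₗ[ℝ] (κ → ℝ) := WithLp.linearEquiv 2 ℝ (κ → ℝ) with he
  have hinner : ∀ u v : E, ⟪u, v⟫ = (e u) ⬝ᵥ (e v) := by
    intro u v
    rw [PiLp.inner_apply]
    simp [RCLike.inner_apply, dotProduct]
    exact Finset.sum_congr rfl fun i _ => mul_comm _ _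
  set L' : Submodule ℝ E := L.comap e.toLinearMap with hL'
  set T : E →ₗ[ℝ] E := e.symm.toLinearMap ∘ₗ (A.mulVecLin ∘ₗ e.toLinearMap) with hTdef
  have hTapp : ∀ u : E, e (T u) = A *ᵥ (e u) := by
    intro u
    simp [hTdef, Matrix.mulVecLin]
  have hdp : ∀ x y : κ → ℝ, (A *ᵥ x) ⬝ᵥ y = x ⬝ᵥ (A *ᵥ y) := by
    intro x y
    rw [dp_mulVec_left, hA.eq]
  have hT : ∀ u v : E, ⟪T u, v⟫ = ⟪u, T v⟫ := by
    intro u v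
    rw [hinner, hinner, hTapp, hTapp, hdp]
  have hpsd' : ∀ l ∈ L', 0 ≤ ⟪l, T l⟫ := by
    intro l hl
    rw [hinner, hTapp]
    exact hpsd (e l) hl
  obtain ⟨S', hS'⟩ := quadMin L' T hT hpsd'
  refine ⟨e.toLinearMap ∘ₗ (S' ∘ₗ e.symm.toLinearMap), ?_⟩
  intro w hw
  have hadm : ∀ l ∈ L', ⟪l, T l⟫ = 0 → ⟪l, e.symm w⟫ = 0 := by
    intro l hl h0
    rw [hinner, hTapp] at h0
    rw [hinner, e.apply_symm_apply]
    exact hw (e l) hl h0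
  obtain ⟨hmem, hmin⟩ := hS' (e.symm w) hadm
  constructor
  · exact hmem
  · intro l hl
    have hl' : e.symm l ∈ L' := by
      simp only [hL', Submodule.mem_comap, LinearEquiv.coe_coe, e.apply_symm_apply]
      exact hl
    have := hmin (e.symm l) hl'
    rw [hinner, hinner, hinner, hinner, hTapp, hTapp] at this
    simp only [e.apply_symm_apply] at this
    exact this

noncomputable def affOf {ι κ : Type} (T : (ι → ℝ) →ₗ[ℝ] (κ → ℝ)) (v₀ : κ → ℝ) :
    (ι → ℝ) →ᵃ[ℝ] (κ → ℝ) where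
  toFun := fun x => T x + v₀
  linear := T
  map_vadd' := by intro p v; simp only [vadd_eq_add, map_add]; abel

lemma affOf_apply {ι κ : Type} (T : (ι → ℝ) →ₗ[ℝ] (κ → ℝ)) (v₀ : κ → ℝ) (x : ι → ℝ) :
    affOf T v₀ x = T x + v₀ := rfl

lemma isNPQF_comp_affine {ι κ : Type} [Fintype ι] [Fintype κ] [DecidableEq ι]
    (f : (κ → ℝ) → ℝ≥0∞) (hf : IsNPQF f)
    (T : (ι → ℝ) →ₗ[ℝ] (κ → ℝ)) (v₀ : κ → ℝ) :
    IsNPQF (fun x => f (T x + v₀)) := by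
  obtain ⟨M, Q, b, c, hQ, hnn, hval, htop⟩ := hf
  obtain ⟨Q', b', c', hQ', heq⟩ := quad_comp_affine Q hQ b c T v₀
  refine ⟨M.comap (affOf T v₀), Q', b', c', hQ', ?_, ?_, ?_⟩
  · intro x hx
    rw [← heq x]
    exact hnn _ (AffineSubspace.mem_comap.mp hx)
  · intro x hx
    show f (T x + v₀) = _
    rw [hval (T x + v₀) (AffineSubspace.mem_comap.mp hx), heq x]
  · intro x hx
    exact htop _ (fun h => hx (AffineSubspace.mem_comap.mpr h))

lemma isNPQF_add {ι : Type} [Fintype ι] (f g : (ι → ℝ) → ℝ≥0∞)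
    (hf : IsNPQF f) (hg : IsNPQF g) : IsNPQF (fun x => f x + g x) := by
  obtain ⟨M₁, Q₁, b₁, c₁, hQ₁, hnn₁, hval₁, htop₁⟩ := hf
  obtain ⟨M₂, Q₂, b₂, c₂, hQ₂, hnn₂, hval₂, htop₂⟩ := hg
  have key : ∀ x : ι → ℝ, x ⬝ᵥ (Q₁ + Q₂) *ᵥ x + (b₁ + b₂) ⬝ᵥ x + (c₁ + c₂)
      = (x ⬝ᵥ Q₁ *ᵥ x + b₁ ⬝ᵥ x + c₁) + (x ⬝ᵥ Q₂ *ᵥ x + b₂ ⬝ᵥ x + c₂) := by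
    intro x
    simp only [Matrix.add_mulVec, dotProduct_add, add_dotProduct]
    ring
  refine ⟨M₁ ⊓ M₂, Q₁ + Q₂, b₁ + b₂, c₁ + c₂, ?_, ?_, ?_, ?_⟩
  · simp [Matrix.IsSymm, Matrix.transpose_add, hQ₁.eq, hQ₂.eq]
  · intro x hx
    rw [key]
    exact add_nonneg (hnn₁ _ hx.1) (hnn₂ _ hx.2)
  · intro x hx
    show f x + g x = _
    rw [key, hval₁ _ hx.1, hval₂ _ hx.2,
      ENNReal.ofReal_add (hnn₁ _ hx.1) (hnn₂ _ hx.2)]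
  · intro x hx
    show f x + g x = ⊤
    by_cases hm : x ∈ M₁
    · have hm2 : x ∉ M₂ := fun h2 => hx ⟨hm, h2⟩
      simp [htop₂ _ hm2]
    · simp [htop₁ _ hm]

noncomputable def Jmap (ι κ : Type) : (κ → ℝ) →ₗ[ℝ] (ι ⊕ κ → ℝ) where
  toFun := fun l => Sum.elim 0 l
  map_add' := by intro l l'; funext s; cases s <;> simp
  map_smul' := by intro r l; funext s; cases s <;> simp

set_option maxHeartbeats 2000000 in
lemma isNPQF_inf {ι κ : Type} [Fintype ι] [Fintype κ] [DecidableEq ι] [DecidableEq κ]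
    (f : (ι ⊕ κ → ℝ) → ℝ≥0∞) (hf : IsNPQF f) :
    IsNPQF (fun x : ι → ℝ => ⨅ y : κ → ℝ, f (Sum.elim x y)) := by
  classical
  obtain ⟨M, Q, b, c, hQ, hnn, hval, htop⟩ := hf
  rcases (M : Set (ι ⊕ κ → ℝ)).eq_empty_or_nonempty with hM | ⟨p₀, hp₀⟩
  · refine ⟨⊥, 0, 0, 0, Matrix.isSymm_zero, ?_, ?_, ?_⟩
    · intro x hx
      exact absurd (by simpa [← SetLike.mem_coe, AffineSubspace.bot_coe] using hx :
        x ∈ (∅ : Set (ι → ℝ))) (Set.notMem_empty x)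
    · intro x hx
      exact absurd (by simpa [← SetLike.mem_coe, AffineSubspace.bot_coe] using hx :
        x ∈ (∅ : Set (ι → ℝ))) (Set.notMem_empty x)
    · intro x _
      rw [iInf_eq_top]
      intro y
      apply htop
      intro h
      rw [Set.eq_empty_iff_forall_notMem] at hM
      exact hM _ h
  -- nonempty case
  set π : (ι ⊕ κ → ℝ) →ₗ[ℝ] (ι → ℝ) := LinearMap.funLeft ℝ ℝ Sum.inl with hπdef
  set J : (κ → ℝ) →ₗ[ℝ] (ι ⊕ κ → ℝ) := Jmap ι κ with hJdef
  have hJinl : ∀ (l : κ → ℝ) (i : ι), J l (Sum.inl i) = 0 := fun _ _ => rfl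
  have hJinr : ∀ (l : κ → ℝ) (k : κ), J l (Sum.inr k) = l k := fun _ _ => rfl
  set D := M.direction with hDdef
  set M' := M.map π.toAffineMap with hM'def
  set L : Submodule ℝ (κ → ℝ) := D.comap J with hLdef
  set A : Matrix κ κ ℝ := Matrix.of (fun k k' => Q (Sum.inr k) (Sum.inr k')) with hAdef
  have hAsymm : A.IsSymm := by
    ext k k'
    exact hQ.apply (Sum.inr k) (Sum.inr k')
  set q : (ι ⊕ κ → ℝ) → ℝ := fun v => v ⬝ᵥ Q *ᵥ v + b ⬝ᵥ v + c with hqdef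
  set bκ : κ → ℝ := fun k => b (Sum.inr k) with hbκ
  set glin : (ι ⊕ κ → ℝ) →ₗ[ℝ] (κ → ℝ) :=
    { toFun := fun v k => 2 * (Q *ᵥ v) (Sum.inr k)
      map_add' := by intro v v'; funext k; simp [Matrix.mulVec_add]; ring
      map_smul' := by intro r v; funext k; simp [Matrix.mulVec_smul]; ring } with hglin
  set g : (ι ⊕ κ → ℝ) → (κ → ℝ) := fun v => glin v + bκ with hgdef
  have hJdp : ∀ (l : κ → ℝ) (w : ι ⊕ κ → ℝ), (J l) ⬝ᵥ w = l ⬝ᵥ (fun k => w (Sum.inr k)) := by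
    intro l w
    simp [dotProduct, Fintype.sum_sum_type, hJinl, hJinr]
  have hdpsymm : ∀ u v : ι ⊕ κ → ℝ, u ⬝ᵥ Q *ᵥ v = v ⬝ᵥ Q *ᵥ u := by
    intro u v
    rw [dotProduct_comm, dp_mulVec_left, hQ.eq]
  have hexp : ∀ (v : ι ⊕ κ → ℝ) (l : κ → ℝ),
      q (v + J l) = q v + l ⬝ᵥ (g v) + l ⬝ᵥ A *ᵥ l := by
    intro v l
    have e1 : v ⬝ᵥ Q *ᵥ (J l) = (J l) ⬝ᵥ Q *ᵥ v := hdpsymm v (J l)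
    have e2 : (J l) ⬝ᵥ Q *ᵥ v = l ⬝ᵥ (fun k => (Q *ᵥ v) (Sum.inr k)) := hJdp l _
    have e3 : (J l) ⬝ᵥ Q *ᵥ (J l) = l ⬝ᵥ A *ᵥ l := by
      rw [hJdp]
      congr 1
      funext k
      show (Q *ᵥ (J l)) (Sum.inr k) = (A *ᵥ l) k
      simp [Matrix.mulVec, dotProduct, Fintype.sum_sum_type, hJinl, hJinr, hAdef]
    have e4 : b ⬝ᵥ (J l) = l ⬝ᵥ bκ := by
      rw [dotProduct_comm, hJdp]
    have e5 : l ⬝ᵥ (g v) = 2 * (l ⬝ᵥ (fun k => (Q *ᵥ v) (Sum.inr k))) + l ⬝ᵥ bκ := by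
      rw [hgdef]
      simp only [dotProduct_add]
      congr 1
      simp only [hglin, dotProduct, LinearMap.coe_mk, AddHom.coe_mk, Finset.mul_sum]
      exact Finset.sum_congr rfl fun k _ => by ring
    simp only [hqdef, Matrix.mulVec_add, dotProduct_add, add_dotProduct]
    rw [e5]
    linear_combination e1 + 2 * e2 + e3 + e4
  set Dπ : D →ₗ[ℝ] (ι → ℝ) := π.comp D.subtype with hDπ
  have hDπrange : LinearMap.range Dπ = D.map π := by
    rw [hDπ, LinearMap.range_comp, Submodule.range_subtype]
  obtain ⟨g₀, hg₀⟩ := LinearMap.exists_rightInverse_of_surjective Dπ.rangeRestrict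
    (LinearMap.range_rangeRestrict Dπ)
  have hg₀app : ∀ u : LinearMap.range Dπ, Dπ (g₀ u) = (u : ι → ℝ) := by
    intro u
    have := congrArg (fun φ => φ u) hg₀
    simpa using congrArg Subtype.val this
  obtain ⟨σ₀, hσ₀eq⟩ := LinearMap.exists_extend (D.subtype.comp g₀)
  have hσ₀ : ∀ u, u ∈ LinearMap.range Dπ → σ₀ u ∈ D ∧ π (σ₀ u) = u := by
    intro u hu
    have h1 : σ₀ u = D.subtype (g₀ ⟨u, hu⟩) := by
      have := congrArg (fun φ => φ (⟨u, hu⟩ : LinearMap.range Dπ)) hσ₀eq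
      simpa using this
    constructor
    · rw [h1]; exact (g₀ ⟨u, hu⟩).2
    · rw [h1]; exact hg₀app ⟨u, hu⟩
  set n : (ι → ℝ) → (ι ⊕ κ → ℝ) := fun x => σ₀ (x - π p₀) + p₀ with hndef
  have hdir : ∀ x ∈ M', x - π p₀ ∈ LinearMap.range Dπ := by
    intro x hx
    obtain ⟨v, hv, rfl⟩ := AffineSubspace.mem_map.mp hx
    rw [hDπrange]
    have hvp : v - p₀ ∈ D := AffineSubspace.vsub_mem_direction hv hp₀
    exact Submodule.mem_map.mpr ⟨v - p₀, hvp, by simp [map_sub]⟩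
  have hn_mem : ∀ x ∈ M', n x ∈ M := by
    intro x hx
    exact AffineSubspace.vadd_mem_of_mem_direction (hσ₀ _ (hdir x hx)).1 hp₀
  have hn_proj : ∀ x ∈ M', π (n x) = x := by
    intro x hx
    have h2 := (hσ₀ _ (hdir x hx)).2
    show π (σ₀ (x - π p₀) + p₀) = x
    rw [map_add, h2]
    abel
  have hfiber : ∀ x ∈ M', ∀ v ∈ M, π v = x → ∃ l ∈ L, v = n x + J l := by
    intro x hx v hv hπv
    have hw : v - n x ∈ D := AffineSubspace.vsub_mem_direction hv (hn_mem x hx)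
    have hw0 : ∀ i, v (Sum.inl i) - n x (Sum.inl i) = 0 := by
      intro i
      have h3 : π (v - n x) = 0 := by
        rw [map_sub, hπv, hn_proj x hx, sub_self]
      exact congrFun h3 i
    refine ⟨fun k => (v - n x) (Sum.inr k), ?_, ?_⟩
    · show J _ ∈ D
      have h4 : J (fun k => (v - n x) (Sum.inr k)) = v - n x := by
        funext s
        cases s with
        | inl i => rw [hJinl]; simp only [Pi.sub_apply]; linarith [hw0 i]
        | inr k => rw [hJinr]
      rw [h4]; exact hw
    · funext s
      cases s with
      | inl i =>
        have h5 := hw0 i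
        show v (Sum.inl i) = n x (Sum.inl i) + J _ (Sum.inl i)
        rw [hJinl]
        linarith
      | inr k =>
        show v (Sum.inr k) = n x (Sum.inr k) + J _ (Sum.inr k)
        rw [hJinr]
        simp only [Pi.sub_apply]
        ring
  have hmemfiber : ∀ x ∈ M', ∀ l ∈ L, n x + J l ∈ M := by
    intro x hx l hl
    have h6 : J l ∈ D := hl
    have h7 := AffineSubspace.vadd_mem_of_mem_direction h6 (hn_mem x hx)
    rw [vadd_eq_add, add_comm] at h7
    exact h7
  have hpsdL : ∀ l ∈ L, 0 ≤ l ⬝ᵥ A *ᵥ l := by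
    intro l hl
    have key : ∀ t : ℝ, 0 ≤ (l ⬝ᵥ A *ᵥ l) * (t * t) + (l ⬝ᵥ g p₀) * t + q p₀ := by
      intro t
      have hJtl : J (t • l) ∈ D := L.smul_mem t hl
      have h1 : p₀ + J (t • l) ∈ M := by
        rw [add_comm]
        exact AffineSubspace.vadd_mem_of_mem_direction hJtl hp₀
      have h2 : (0:ℝ) ≤ q (p₀ + J (t • l)) := hnn _ h1
      rw [hexp] at h2
      rw [smul_dotProduct, Matrix.mulVec_smul, dotProduct_smul, smul_dotProduct,
        smul_eq_mul, smul_eq_mul, smul_eq_mul] at h2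
      nlinarith [h2]
    exact (quad_nonneg_coeffs key).1
  have hadm : ∀ x ∈ M', ∀ l ∈ L, l ⬝ᵥ A *ᵥ l = 0 → l ⬝ᵥ (g (n x)) = 0 := by
    intro x hx l hl hA0
    have key : ∀ t : ℝ, 0 ≤ (0:ℝ) * (t * t) + (l ⬝ᵥ g (n x)) * t + q (n x) := by
      intro t
      have h2 : (0:ℝ) ≤ q (n x + J (t • l)) := hnn _ (hmemfiber x hx _ (L.smul_mem t hl))
      rw [hexp] at h2
      rw [smul_dotProduct, Matrix.mulVec_smul, dotProduct_smul, smul_dotProduct,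
        smul_eq_mul, smul_eq_mul, smul_eq_mul, hA0] at h2
      nlinarith [h2]
    exact (quad_nonneg_coeffs key).2 rfl
  obtain ⟨S, hS⟩ := quadMin' L A hAsymm hpsdL
  set Tlin : (ι → ℝ) →ₗ[ℝ] (ι ⊕ κ → ℝ) := σ₀ + (J ∘ₗ (S ∘ₗ (glin ∘ₗ σ₀))) with hTlin
  set n₀ : ι ⊕ κ → ℝ := p₀ - σ₀ (π p₀) with hn₀
  set v₀ : ι ⊕ κ → ℝ := n₀ + J (S (glin n₀ + bκ)) with hv₀
  have hnx : ∀ x, n x = σ₀ x + n₀ := by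
    intro x
    show σ₀ (x - π p₀) + p₀ = σ₀ x + n₀
    rw [map_sub, hn₀]
    abel
  have hΨ : ∀ x, Tlin x + v₀ = n x + J (S (g (n x))) := by
    intro x
    simp only [hTlin, hv₀, LinearMap.add_apply, LinearMap.comp_apply, hnx, hgdef, map_add]
    abel
  obtain ⟨Q', b', c', hQ'symm, hquad⟩ := quad_comp_affine Q hQ b c Tlin v₀
  have hquad' : ∀ z, q (Tlin z + v₀) = z ⬝ᵥ Q' *ᵥ z + b' ⬝ᵥ z + c' := hquad
  have hΨmem : ∀ x ∈ M', Tlin x + v₀ ∈ M := by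
    intro x hx
    rw [hΨ x]
    exact hmemfiber x hx _ (hS (g (n x)) (hadm x hx)).1
  refine ⟨M', Q', b', c', hQ'symm, ?_, ?_, ?_⟩
  · intro x hx
    rw [← hquad' x]
    exact hnn _ (hΨmem x hx)
  · intro x hx
    show (⨅ y : κ → ℝ, f (Sum.elim x y)) = _
    rw [← hquad' x]
    obtain ⟨hSL, hSmin⟩ := hS (g (n x)) (hadm x hx)
    set l₀ := S (g (n x)) with hl₀
    have hfib : n x + J l₀ ∈ M := hmemfiber x hx l₀ hSL
    apply le_antisymm
    · have hy : Sum.elim x (fun k => (n x + J l₀) (Sum.inr k)) = n x + J l₀ := by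
        funext s
        cases s with
        | inl i =>
          have h8 := congrFun (hn_proj x hx) i
          show x i = n x (Sum.inl i) + J l₀ (Sum.inl i)
          rw [hJinl, add_zero]
          exact h8.symm
        | inr k => rfl
      calc (⨅ y : κ → ℝ, f (Sum.elim x y))
          ≤ f (Sum.elim x (fun k => (n x + J l₀) (Sum.inr k))) := iInf_le _ _
        _ = ENNReal.ofReal (q (Tlin x + v₀)) := by
            rw [hy, hval _ hfib, hΨ x]
    · apply le_iInf
      intro y
      by_cases hmem : Sum.elim x y ∈ M
      · obtain ⟨l, hlL, hleq⟩ := hfiber x hx _ hmem (by funext i; rfl)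
        rw [hval _ hmem, hleq]
        apply ENNReal.ofReal_le_ofReal
        show q (Tlin x + v₀) ≤ q (n x + J l)
        rw [hΨ x, hexp, hexp]
        have h9 := hSmin l hlL
        linarith
      · rw [htop _ hmem]
        exact le_top
  · intro x hx
    show (⨅ y : κ → ℝ, f (Sum.elim x y)) = ⊤
    rw [iInf_eq_top]
    intro y
    apply htop
    intro hmem
    exact hx (AffineSubspace.mem_map.mpr ⟨Sum.elim x y, hmem, rfl⟩)

/-- If `F : ℝᵐ × ℝⁿ → [0,∞]` and `G : ℝⁿ × ℝᵖ → [0,∞]` are nonnegative partial quadratic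
functions (under the identification of `ℝᵐ × ℝⁿ` with `ℝ^{m+n}` via `Fin m ⊕ Fin n`),
then their relational composite `(F;G)(x,z) = inf_y (F(x,y) + G(y,z))` is a nonnegative
partial quadratic function on `ℝ^{m+p}`. -/
theorem isNPQF_comp {m n p : ℕ}
    (F : (Fin m → ℝ) → (Fin n → ℝ) → ℝ≥0∞) (G : (Fin n → ℝ) → (Fin p → ℝ) → ℝ≥0∞)
    (hF : IsNPQF (fun v : Fin m ⊕ Fin n → ℝ => F (v ∘ Sum.inl) (v ∘ Sum.inr)))
    (hG : IsNPQF (fun v : Fin n ⊕ Fin p → ℝ => G (v ∘ Sum.inl) (v ∘ Sum.inr))) :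
    IsNPQF (fun v : Fin m ⊕ Fin p → ℝ =>
      ⨅ y : Fin n → ℝ, F (v ∘ Sum.inl) y + G y (v ∘ Sum.inr)) := by
  have h1 : IsNPQF (fun w : ((Fin m ⊕ Fin p) ⊕ Fin n) → ℝ =>
      F (w ∘ (Sum.inl ∘ Sum.inl)) (w ∘ Sum.inr)) := by
    have h := isNPQF_comp_affine _ hF
      (LinearMap.funLeft ℝ ℝ ((Sum.elim (Sum.inl ∘ Sum.inl) Sum.inr) :
        Fin m ⊕ Fin n → (Fin m ⊕ Fin p) ⊕ Fin n)) 0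
    simp only [add_zero] at h
    convert h using 1
    funext w
    rfl
  have h2 : IsNPQF (fun w : ((Fin m ⊕ Fin p) ⊕ Fin n) → ℝ =>
      G (w ∘ Sum.inr) (w ∘ (Sum.inl ∘ Sum.inr))) := by
    have h := isNPQF_comp_affine _ hG
      (LinearMap.funLeft ℝ ℝ ((Sum.elim Sum.inr (Sum.inl ∘ Sum.inr)) :
        Fin n ⊕ Fin p → (Fin m ⊕ Fin p) ⊕ Fin n)) 0
    simp only [add_zero] at h
    convert h using 1
    funext w
    rfl
  exact isNPQF_inf _ (isNPQF_add _ _ h1 h2)
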